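/- arXiv:2004.06388 — 3 statements merged into one kernel-verified Lean document; each statement's English description precedes it below -/
import Mathlib

section
/- Let A₁ = P₁ − R₁ + S₁ and A₂ = P₂ − R₂ + S₂ be convergent double weak splittings of type II of symmetric nonsingular matrices A₁ ∈ ℝ^{n×n} and A₂ ∈ ℝ^{n×n} respectively, with iteration matrices W̃₁ and W̃₂. If R₁P₁⁻¹ ≥ R₂P₂⁻¹ and A₁P₁⁻¹ ≥ A₂P₂⁻¹, then ρ(W̃₁) ≤ ρ(W̃₂) < 1. -/
open Matrix Filter Topology

/-- The spectral radius of a real square matrix: the maximum (supremum) of the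
moduli of its complex eigenvalues. -/
noncomputable def specRad {n : Type*} [Fintype n] [DecidableEq n]
    (B : Matrix n n ℝ) : ℝ :=
  sSup ((fun z : ℂ => ‖z‖) '' spectrum ℂ (B.map Complex.ofReal))

/-- Entrywise order on real matrices: `entryLE A B` means every entry of `A` is
at most the corresponding entry of `B`. -/
def entryLE {m n : Type*} (A B : Matrix m n ℝ) : Prop :=
  ∀ i j, A i j ≤ B i j

/-- `X` is the Moore–Penrose inverse of `A`. -/
def IsMoorePenrose {m n : Type*} [Fintype m] [Fintype n]
    (A : Matrix m n ℝ) (X : Matrix n m ℝ) : Prop :=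
  A * X * A = A ∧ X * A * X = X ∧ (A * X)ᵀ = A * X ∧ (X * A)ᵀ = X * A

/-- Iteration matrix of a double weak splitting of type II:
`W̃ = [[(RP⁻¹)ᵀ, −(SP⁻¹)ᵀ],[I, 0]]`. -/
noncomputable def itMatII {n : Type*} [Fintype n] [DecidableEq n]
    (P R S : Matrix n n ℝ) : Matrix (n ⊕ n) (n ⊕ n) ℝ :=
  Matrix.fromBlocks ((R * P⁻¹)ᵀ) (-((S * P⁻¹)ᵀ)) 1 0

/-- Iteration matrix of a double weak splitting of type I:
`Ŵ = [[P⁻¹R, −P⁻¹S],[I, 0]]`. -/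
noncomputable def itMatI {n : Type*} [Fintype n] [DecidableEq n]
    (P R S : Matrix n n ℝ) : Matrix (n ⊕ n) (n ⊕ n) ℝ :=
  Matrix.fromBlocks (P⁻¹ * R) (-(P⁻¹ * S)) 1 0

section aux
attribute [local instance] Matrix.linftyOpNormedRing Matrix.linftyOpNormedAlgebra

variable {k : Type*} [Fintype k] [DecidableEq k]

lemma specRad_nonneg (B : Matrix k k ℝ) : 0 ≤ specRad B :=
  Real.sSup_nonneg (by rintro x ⟨μ, -, rfl⟩; exact norm_nonneg μ)

lemma spectrum_transpose (M : Matrix k k ℂ) : spectrum ℂ Mᵀ = spectrum ℂ M := by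
  ext μ
  have key : ∀ N : Matrix k k ℂ,
      algebraMap ℂ (Matrix k k ℂ) μ - Nᵀ = (algebraMap ℂ (Matrix k k ℂ) μ - N)ᵀ := by
    intro N
    rw [Matrix.transpose_sub, Algebra.algebraMap_eq_smul_one, Matrix.transpose_smul,
      Matrix.transpose_one]
  simp only [spectrum.mem_iff, not_iff_not, key, Matrix.isUnit_iff_isUnit_det,
    Matrix.det_transpose]

lemma specRad_transpose (B : Matrix k k ℝ) : specRad Bᵀ = specRad B := by
  unfold specRad
  rw [Matrix.transpose_map, spectrum_transpose]

lemma specRad_of_isEmpty [IsEmpty k] (B : Matrix k k ℝ) : specRad B = 0 := by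
  have : spectrum ℂ (B.map Complex.ofReal) = ∅ := by
    ext μ; simp [spectrum.mem_iff, isUnit_of_subsingleton]
  simp [specRad, this, Real.sSup_empty]

lemma exists_abs_eq_specRad {B : Matrix k k ℝ}
    (hne : (spectrum ℂ (B.map Complex.ofReal)).Nonempty) :
    ∃ μ ∈ spectrum ℂ (B.map Complex.ofReal), ‖μ‖ = specRad B := by
  have hfin : ((fun z : ℂ => ‖z‖) '' spectrum ℂ (B.map Complex.ofReal)).Finite :=
    (Matrix.finite_spectrum _).image _
  have hmem := (hne.image _).csSup_mem hfin
  obtain ⟨μ, hμ, h⟩ := hmem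
  exact ⟨μ, hμ, h⟩

lemma abs_le_specRad {B : Matrix k k ℝ} {μ : ℂ}
    (hμ : μ ∈ spectrum ℂ (B.map Complex.ofReal)) : ‖μ‖ ≤ specRad B :=
  le_csSup (((Matrix.finite_spectrum _).image _).bddAbove) ⟨μ, hμ, rfl⟩

lemma exists_eigenvec {M : Matrix k k ℂ} {μ : ℂ} (h : μ ∈ spectrum ℂ M) :
    ∃ v : k → ℂ, v ≠ 0 ∧ M.mulVec v = μ • v := by
  rw [spectrum.mem_iff] at h
  have hdet : (algebraMap ℂ (Matrix k k ℂ) μ - M).det = 0 := by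
    by_contra hd
    exact h ((Matrix.isUnit_iff_isUnit_det _).2 (isUnit_iff_ne_zero.2 hd))
  obtain ⟨v, hv, hmul⟩ := (Matrix.exists_mulVec_eq_zero_iff).2 hdet
  refine ⟨v, hv, ?_⟩
  rw [Algebra.algebraMap_eq_smul_one, Matrix.sub_mulVec, Matrix.smul_mulVec,
    Matrix.one_mulVec, sub_eq_zero] at hmul
  exact hmul.symm

lemma exists_subinv_vec [Nonempty k] {B : Matrix k k ℝ} (hB : ∀ i j, 0 ≤ B i j) :
    ∃ x : k → ℝ, (∀ i, 0 ≤ x i) ∧ x ≠ 0 ∧ ∀ i, specRad B * x i ≤ B.mulVec x i := by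
  haveI : CompleteSpace (Matrix k k ℂ) := FiniteDimensional.complete ℂ _
  have hne : (spectrum ℂ (B.map Complex.ofReal)).Nonempty := spectrum.nonempty _
  obtain ⟨μ, hμmem, hμ⟩ := exists_abs_eq_specRad hne
  obtain ⟨v, hv0, hveq⟩ := exists_eigenvec hμmem
  refine ⟨fun i => ‖v i‖, fun i => norm_nonneg _, ?_, ?_⟩
  · intro h
    apply hv0
    funext i
    have := congrFun h i
    simpa using this
  · intro i
    have h1 : (B.map Complex.ofReal).mulVec v i = μ * v i := by
      rw [hveq]; rfl
    have h2 : ‖(B.map Complex.ofReal).mulVec v i‖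
        ≤ B.mulVec (fun j => ‖v j‖) i := by
      rw [Matrix.mulVec, dotProduct]
      refine (norm_sum_le _ _).trans ?_
      rw [Matrix.mulVec, dotProduct]
      refine le_of_eq (Finset.sum_congr rfl fun j _ => ?_)
      rw [Matrix.map_apply, norm_mul, Complex.norm_real, Real.norm_of_nonneg (hB i j)]
    calc specRad B * ‖v i‖ = ‖μ * v i‖ := by
          rw [norm_mul, hμ]
      _ ≤ _ := by rw [← h1]; exact h2

lemma pow_entry_nonneg {B : Matrix k k ℝ} (hB : ∀ i j, 0 ≤ B i j) (m : ℕ) :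
    ∀ i j, 0 ≤ (B ^ m) i j := by
  induction m with
  | zero => intro i j; simp [Matrix.one_apply]; positivity
  | succ m ih =>
    intro i j
    rw [pow_succ, Matrix.mul_apply]
    exact Finset.sum_nonneg fun l _ => mul_nonneg (ih i l) (hB l j)

lemma nnnorm_map_ofReal (C : Matrix k k ℝ) : ‖C.map Complex.ofReal‖₊ = ‖C‖₊ := by
  rw [Matrix.linfty_opNNNorm_def, Matrix.linfty_opNNNorm_def]
  congr 1
  funext i
  refine Finset.sum_congr rfl fun j _ => ?_
  simp [Matrix.map_apply]

lemma rowsum_le_nnnorm (C : Matrix k k ℝ) (i : k) :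
    ∑ j, ‖C i j‖₊ ≤ ‖C‖₊ := by
  rw [Matrix.linfty_opNNNorm_def]
  exact Finset.le_sup (f := fun i => ∑ j, ‖C i j‖₊) (Finset.mem_univ i)

lemma le_specRad_of_subinv [Nonempty k] {B : Matrix k k ℝ} (hB : ∀ i j, 0 ≤ B i j)
    {x : k → ℝ} (hx0 : ∀ i, 0 ≤ x i) (hxne : x ≠ 0) {α : ℝ} (hα : 0 ≤ α)
    (h : ∀ i, α * x i ≤ B.mulVec x i) : α ≤ specRad B := by
  haveI : CompleteSpace (Matrix k k ℂ) := FiniteDimensional.complete ℂ _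
  -- x has a positive maximal entry
  obtain ⟨i₀, hi₀⟩ := Finite.exists_max x
  have hx_pos : 0 < x i₀ := by
    rcases Function.ne_iff.1 hxne with ⟨j, hj⟩
    have : 0 < x j := lt_of_le_of_ne (hx0 j) (Ne.symm hj)
    exact lt_of_lt_of_le this (hi₀ j)
  -- key iterate bound
  have key : ∀ m : ℕ, ∀ i, α ^ m * x i ≤ (B ^ m).mulVec x i := by
    intro m
    induction m with
    | zero => intro i; simp [Matrix.one_mulVec]
    | succ m ih =>
      intro i
      have h1 : (B ^ (m + 1)).mulVec x i = B.mulVec ((B ^ m).mulVec x) i := by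
        rw [pow_succ', ← Matrix.mulVec_mulVec]
      rw [h1]
      have h2 : B.mulVec (fun j => α ^ m * x j) i ≤ B.mulVec ((B ^ m).mulVec x) i := by
        simp only [Matrix.mulVec, dotProduct]
        exact Finset.sum_le_sum fun j _ => mul_le_mul_of_nonneg_left (ih j) (hB i j)
      have h3 : B.mulVec (fun j => α ^ m * x j) i = α ^ m * B.mulVec x i := by
        simp only [Matrix.mulVec, dotProduct, Finset.mul_sum]
        exact Finset.sum_congr rfl fun j _ => by ring
      calc α ^ (m + 1) * x i = α ^ m * (α * x i) := by ring
        _ ≤ α ^ m * B.mulVec x i :=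
            mul_le_mul_of_nonneg_left (h i) (pow_nonneg hα m)
        _ = B.mulVec (fun j => α ^ m * x j) i := h3.symm
        _ ≤ _ := h2
  -- norm bound: α ^ m ≤ ‖B ^ m‖
  have normbd : ∀ m : ℕ, α ^ m ≤ ‖B ^ m‖ := by
    intro m
    have h1 : α ^ m * x i₀ ≤ (∑ j, (B ^ m) i₀ j) * x i₀ := by
      refine (key m i₀).trans ?_
      rw [Matrix.mulVec, dotProduct, Finset.sum_mul]
      exact Finset.sum_le_sum fun j _ =>
        mul_le_mul_of_nonneg_left (hi₀ j) (pow_entry_nonneg hB m i₀ j)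
    have h2 : α ^ m ≤ ∑ j, (B ^ m) i₀ j := le_of_mul_le_mul_right h1 hx_pos
    refine h2.trans ?_
    have h3 : ∑ j, (B ^ m) i₀ j = ((∑ j, ‖(B ^ m) i₀ j‖₊ : NNReal) : ℝ) := by
      push_cast
      exact Finset.sum_congr rfl fun j _ =>
        (Real.norm_of_nonneg (pow_entry_nonneg hB m i₀ j)).symm
    rw [h3, ← coe_nnnorm]
    exact_mod_cast rowsum_le_nnnorm (B ^ m) i₀
  -- Gelfand
  set M := B.map Complex.ofReal with hM
  have hpow : ∀ m : ℕ, M ^ m = (B ^ m).map Complex.ofReal := by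
    intro m
    have : M = Complex.ofRealHom.mapMatrix B := rfl
    rw [this, ← _root_.map_pow]
    rfl
  have hnorm : ∀ m : ℕ, (α.toNNReal : NNReal) ^ m ≤ ‖M ^ m‖₊ := by
    intro m
    rw [hpow, nnnorm_map_ofReal]
    have := normbd m
    rw [← Real.toNNReal_pow hα] at *
    refine NNReal.coe_le_coe.mp ?_
    rw [Real.coe_toNNReal _ (pow_nonneg hα m)]
    exact this.trans (le_of_eq (by rw [coe_nnnorm]))
  have htend := spectrum.pow_nnnorm_pow_one_div_tendsto_nhds_spectralRadius M
  have hev : ∀ᶠ m : ℕ in atTop,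
      (ENNReal.ofReal α) ≤ (‖M ^ m‖₊ : ENNReal) ^ (1 / (m : ℝ)) := by
    filter_upwards [eventually_ge_atTop 1] with m hm
    have hm0 : (m : ℝ) ≠ 0 := by positivity
    have h1 : (ENNReal.ofReal α) ^ (m : ℕ) ≤ (‖M ^ m‖₊ : ENNReal) := by
      rw [ENNReal.ofReal]
      rw [← ENNReal.coe_pow]
      exact_mod_cast hnorm m
    have h2 := ENNReal.rpow_le_rpow h1 (by positivity : (0:ℝ) ≤ 1 / (m:ℝ))
    calc (ENNReal.ofReal α) = ((ENNReal.ofReal α) ^ (m : ℕ)) ^ (1 / (m : ℝ)) := by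
          rw [← ENNReal.rpow_natCast, ← ENNReal.rpow_mul, mul_one_div_cancel hm0,
            ENNReal.rpow_one]
      _ ≤ _ := h2
  have hle : ENNReal.ofReal α ≤ spectralRadius ℂ M := ge_of_tendsto htend hev
  -- convert back
  have hne : (spectrum ℂ M).Nonempty := spectrum.nonempty M
  obtain ⟨μ, hμmem, hμ⟩ := spectrum.exists_nnnorm_eq_spectralRadius_of_nonempty hne
  rw [← hμ] at hle
  have h5 : α ≤ ‖μ‖ := by
    rw [← enorm_eq_nnnorm, ← ofReal_norm] at hle
    exact (ENNReal.ofReal_le_ofReal_iff (norm_nonneg μ)).mp hle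
  exact h5.trans (abs_le_specRad hμmem)

lemma mulVec_entry_nonneg {M : Matrix k k ℝ} (hM : ∀ i j, 0 ≤ M i j) {x : k → ℝ}
    (hx : ∀ j, 0 ≤ x j) (i : k) : 0 ≤ M.mulVec x i := by
  simp only [Matrix.mulVec, dotProduct]
  exact Finset.sum_nonneg fun j _ => mul_nonneg (hM i j) (hx j)

lemma mulVec_mono_mat {M N : Matrix k k ℝ} (h : ∀ i j, M i j ≤ N i j) {x : k → ℝ}
    (hx : ∀ j, 0 ≤ x j) (i : k) : M.mulVec x i ≤ N.mulVec x i := by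
  simp only [Matrix.mulVec, dotProduct]
  exact Finset.sum_le_sum fun j _ => mul_le_mul_of_nonneg_right (h i j) (hx j)

end aux

theorem stmt13 {n : ℕ} (A₁ P₁ R₁ S₁ A₂ P₂ R₂ S₂ : Matrix (Fin n) (Fin n) ℝ)
    (hAsym₁ : A₁ᵀ = A₁) (hAinv₁ : IsUnit A₁.det)
    (hAsym₂ : A₂ᵀ = A₂) (hAinv₂ : IsUnit A₂.det)
    -- double weak splittings of type II of `A₁` and `A₂`
    (hsplit₁ : A₁ = P₁ - R₁ + S₁) (hPinv₁ : IsUnit P₁.det)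
    (hRP₁ : entryLE 0 (R₁ * P₁⁻¹)) (hSP₁ : entryLE 0 (-(S₁ * P₁⁻¹)))
    (hsplit₂ : A₂ = P₂ - R₂ + S₂) (hPinv₂ : IsUnit P₂.det)
    (hRP₂ : entryLE 0 (R₂ * P₂⁻¹)) (hSP₂ : entryLE 0 (-(S₂ * P₂⁻¹)))
    -- both splittings are convergent
    (hconv₁ : specRad (itMatII P₁ R₁ S₁) < 1)
    (hconv₂ : specRad (itMatII P₂ R₂ S₂) < 1)
    -- `R₁P₁⁻¹ ≥ R₂P₂⁻¹` and `A₁P₁⁻¹ ≥ A₂P₂⁻¹`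
    (hR : entryLE (R₂ * P₂⁻¹) (R₁ * P₁⁻¹)) (hAP : entryLE (A₂ * P₂⁻¹) (A₁ * P₁⁻¹)) :
    specRad (itMatII P₁ R₁ S₁) ≤ specRad (itMatII P₂ R₂ S₂) ∧
      specRad (itMatII P₂ R₂ S₂) < 1 := by
  refine ⟨?_, hconv₂⟩
  rcases Nat.eq_zero_or_pos n with hn | hn
  · haveI : IsEmpty (Fin n ⊕ Fin n) := by subst hn; infer_instance
    rw [specRad_of_isEmpty]
    exact specRad_nonneg _
  haveI hne : Nonempty (Fin n) := Fin.pos_iff_nonempty.mp hn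
  set W₁ : Matrix (Fin n ⊕ Fin n) (Fin n ⊕ Fin n) ℝ :=
    Matrix.fromBlocks (R₁ * P₁⁻¹) 1 (-(S₁ * P₁⁻¹)) 0 with hW₁
  set W₂ : Matrix (Fin n ⊕ Fin n) (Fin n ⊕ Fin n) ℝ :=
    Matrix.fromBlocks (R₂ * P₂⁻¹) 1 (-(S₂ * P₂⁻¹)) 0 with hW₂
  have hW₁T : (itMatII P₁ R₁ S₁)ᵀ = W₁ := by
    rw [hW₁, itMatII, Matrix.fromBlocks_transpose]
    simp
  have hW₂T : (itMatII P₂ R₂ S₂)ᵀ = W₂ := by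
    rw [hW₂, itMatII, Matrix.fromBlocks_transpose]
    simp
  have hs₁ : specRad W₁ = specRad (itMatII P₁ R₁ S₁) := by rw [← hW₁T, specRad_transpose]
  have hs₂ : specRad W₂ = specRad (itMatII P₂ R₂ S₂) := by rw [← hW₂T, specRad_transpose]
  set ρ₁ := specRad (itMatII P₁ R₁ S₁) with hρ
  rcases le_or_gt ρ₁ 0 with h0 | hρpos
  · exact h0.trans (specRad_nonneg _)
  have hblock_nn : ∀ (H K : Matrix (Fin n) (Fin n) ℝ), entryLE 0 H → entryLE 0 K →
      ∀ i j, 0 ≤ (Matrix.fromBlocks H 1 K 0 : Matrix (Fin n ⊕ Fin n) (Fin n ⊕ Fin n) ℝ) i j := by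
    intro H K hH hK i j
    rcases i with i | i <;> rcases j with j | j
    · simpa using hH i j
    · rcases eq_or_ne i j with h | h <;> simp [Matrix.one_apply, h]
    · simpa using hK i j
    · simp
  have hW₁nn : ∀ i j, 0 ≤ W₁ i j := by rw [hW₁]; exact hblock_nn _ _ hRP₁ hSP₁
  have hW₂nn : ∀ i j, 0 ≤ W₂ i j := by rw [hW₂]; exact hblock_nn _ _ hRP₂ hSP₂
  obtain ⟨z, hz0, hzne, hz⟩ := exists_subinv_vec hW₁nn
  rw [hs₁] at hz
  set z₁ : Fin n → ℝ := fun i => z (Sum.inl i) with hz₁def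
  set z₂ : Fin n → ℝ := fun i => z (Sum.inr i) with hz₂def
  have hzelim : z = Sum.elim z₁ z₂ := by funext t; rcases t with i | i <;> rfl
  have hWz : W₁.mulVec z = Sum.elim ((R₁ * P₁⁻¹).mulVec z₁ + z₂) ((-(S₁ * P₁⁻¹)).mulVec z₁) := by
    rw [hW₁, hzelim, Matrix.fromBlocks_mulVec, Sum.elim_comp_inl, Sum.elim_comp_inr,
      Matrix.one_mulVec, Matrix.zero_mulVec, add_zero]
  have key1 : ∀ i, ρ₁ * z₁ i ≤ (R₁ * P₁⁻¹).mulVec z₁ i + z₂ i := by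
    intro i
    have h := hz (Sum.inl i)
    rw [hWz] at h
    simpa using h
  have key2 : ∀ i, ρ₁ * z₂ i ≤ (-(S₁ * P₁⁻¹)).mulVec z₁ i := by
    intro i
    have h := hz (Sum.inr i)
    rw [hWz] at h
    simpa using h
  -- z₁ ≠ 0
  have hz₁0 : ∀ i, 0 ≤ z₁ i := fun i => hz0 _
  have hz₂0 : ∀ i, 0 ≤ z₂ i := fun i => hz0 _
  have hz₁ne : z₁ ≠ 0 := by
    intro hzero
    apply hzne
    have hz₂zero : z₂ = 0 := by
      funext i
      have h := key2 i
      rw [hzero] at h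
      have : (-(S₁ * P₁⁻¹)).mulVec 0 i = 0 := by rw [Matrix.mulVec_zero]; rfl
      rw [this] at h
      have h' : ρ₁ * z₂ i ≤ ρ₁ * 0 := by rw [mul_zero]; exact h
      exact le_antisymm ((mul_le_mul_iff_right₀ hρpos).mp h') (hz₂0 i)
    funext t
    rcases t with i | i
    · exact congrFun hzero i
    · exact congrFun hz₂zero i
  -- matrix identities: -(S*P⁻¹) = 1 - R*P⁻¹ - A*P⁻¹
  have hid : ∀ (A P R S : Matrix (Fin n) (Fin n) ℝ), A = P - R + S → IsUnit P.det →
      -(S * P⁻¹) = 1 - R * P⁻¹ - A * P⁻¹ := by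
    intro A P R S hsplit hP
    have h1 : A * P⁻¹ = 1 - R * P⁻¹ + S * P⁻¹ := by
      rw [hsplit, Matrix.add_mul, Matrix.sub_mul, Matrix.mul_nonsing_inv _ hP]
    rw [h1]
    abel
  have hid₁ := hid A₁ P₁ R₁ S₁ hsplit₁ hPinv₁
  have hid₂ := hid A₂ P₂ R₂ S₂ hsplit₂ hPinv₂
  -- componentwise quantities
  have hb : ∀ (A P R S : Matrix (Fin n) (Fin n) ℝ), -(S * P⁻¹) = 1 - R * P⁻¹ - A * P⁻¹ →
      ∀ i, (-(S * P⁻¹)).mulVec z₁ i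
        = z₁ i - (R * P⁻¹).mulVec z₁ i - (A * P⁻¹).mulVec z₁ i := by
    intro A P R S h i
    rw [h, Matrix.sub_mulVec, Matrix.sub_mulVec, Matrix.one_mulVec]
    rfl
  have hb₁ := hb A₁ P₁ R₁ S₁ hid₁
  have hb₂ := hb A₂ P₂ R₂ S₂ hid₂
  -- the central inequality
  have central : ∀ i, ρ₁ * (ρ₁ * z₁ i)
      ≤ ρ₁ * (R₂ * P₂⁻¹).mulVec z₁ i + (-(S₂ * P₂⁻¹)).mulVec z₁ i := by
    intro i
    have ha : (R₂ * P₂⁻¹).mulVec z₁ i ≤ (R₁ * P₁⁻¹).mulVec z₁ i :=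
      mulVec_mono_mat hR hz₁0 i
    have hc : (A₂ * P₂⁻¹).mulVec z₁ i ≤ (A₁ * P₁⁻¹).mulVec z₁ i :=
      mulVec_mono_mat hAP hz₁0 i
    have e1 : ρ₁ * (ρ₁ * z₁ i) ≤ ρ₁ * ((R₁ * P₁⁻¹).mulVec z₁ i + z₂ i) :=
      mul_le_mul_of_nonneg_left (key1 i) hρpos.le
    have e2 : ρ₁ * z₂ i ≤ (-(S₁ * P₁⁻¹)).mulVec z₁ i := key2 i
    have e3 := hb₁ i
    have e4 := hb₂ i
    have e5 : (0:ℝ) ≤ ((R₁ * P₁⁻¹).mulVec z₁ i - (R₂ * P₂⁻¹).mulVec z₁ i) * (1 - ρ₁) :=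
      mul_nonneg (sub_nonneg.2 ha) (sub_nonneg.2 hconv₁.le)
    nlinarith [e1, e2, e3, e4, e5, hc]
  -- build w
  set b₂ : Fin n → ℝ := (-(S₂ * P₂⁻¹)).mulVec z₁ with hb₂def
  set w : Fin n ⊕ Fin n → ℝ := Sum.elim (fun i => ρ₁ * z₁ i) b₂ with hwdef
  have hw0 : ∀ t, 0 ≤ w t := by
    rintro (i | i)
    · exact mul_nonneg hρpos.le (hz₁0 i)
    · exact mulVec_entry_nonneg (fun i j => by simpa using hSP₂ i j) hz₁0 i
  have hwne : w ≠ 0 := by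
    intro h0
    apply hz₁ne
    funext i
    have := congrFun h0 (Sum.inl i)
    simp only [hwdef, Sum.elim_inl, Pi.zero_apply] at this
    exact (mul_eq_zero.1 this).resolve_left (ne_of_gt hρpos)
  have hWw : W₂.mulVec w = Sum.elim
      ((R₂ * P₂⁻¹).mulVec (fun i => ρ₁ * z₁ i) + b₂)
      ((-(S₂ * P₂⁻¹)).mulVec (fun i => ρ₁ * z₁ i)) := by
    rw [hW₂, hwdef, Matrix.fromBlocks_mulVec, Sum.elim_comp_inl, Sum.elim_comp_inr,
      Matrix.one_mulVec, Matrix.zero_mulVec, add_zero]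
  have hsmul : ∀ (M : Matrix (Fin n) (Fin n) ℝ) i,
      M.mulVec (fun i => ρ₁ * z₁ i) i = ρ₁ * M.mulVec z₁ i := by
    intro M i
    simp only [Matrix.mulVec, dotProduct, Finset.mul_sum]
    exact Finset.sum_congr rfl fun j _ => by ring
  have hsub : ∀ t, ρ₁ * w t ≤ W₂.mulVec w t := by
    rintro (i | i)
    · rw [hWw]
      simp only [Sum.elim_inl, Pi.add_apply, hwdef]
      rw [hsmul]
      exact central i
    · rw [hWw]
      simp only [Sum.elim_inr, hwdef]
      rw [hsmul]
  have := le_specRad_of_subinv hW₂nn hw0 hwne hρpos.le hsub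
  rwa [hs₂] at this
end

section
/- Let A ∈ ℝ^{m×n} and let A = P − R + S be a double proper weak splitting of type I of A with A†P ≥ 0, with iteration matrix W = [[P†R, −P†S],[I, 0]]. For each λ > 0 let B_λ = P_λ − R_λ + S_λ be a double weak splitting of type I of B_λ = AᵀA + λI with B_λ⁻¹P_λ ≥ 0, with iteration matrix W_λ = [[P_λ⁻¹R_λ, −P_λ⁻¹S_λ],[I, 0]]. Suppose that, as λ → 0⁺, P_λ⁻¹R_λ converges entrywise to a matrix R₀ with P†R ≥ R₀ and P_λ⁻¹S_λ converges entrywise to a matrix S₀ with S₀ ≥ P†S. Then ρ(W) < 1, and for every real number r such that ρ(W_λ) → r as λ → 0⁺, one has r ≤ ρ(W). -/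
open Matrix Filter Topology

set_option linter.unusedSectionVars false
set_option linter.unusedVariables false
set_option maxHeartbeats 1600000
open scoped NNReal ENNReal

namespace Stmt16

variable {ι : Type*} [Fintype ι] [DecidableEq ι]

lemma nn_mul {A B : Matrix ι ι ℝ} (hA : entryLE 0 A) (hB : entryLE 0 B) :
    entryLE 0 (A * B) := by
  intro i j
  rw [Matrix.zero_apply, Matrix.mul_apply]
  exact Finset.sum_nonneg fun k _ => mul_nonneg (by simpa using hA i k) (by simpa using hB k j)

lemma nn_pow {A : Matrix ι ι ℝ} (hA : entryLE 0 A) (k : ℕ) : entryLE 0 (A ^ k) := by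
  induction k with
  | zero => intro i j; rw [pow_zero, Matrix.zero_apply, Matrix.one_apply]; positivity
  | succ k ih => rw [pow_succ]; exact nn_mul ih hA

lemma mulVec_mono {A : Matrix ι ι ℝ} (hA : entryLE 0 A) {u v : ι → ℝ} (h : ∀ i, u i ≤ v i) :
    ∀ i, A.mulVec u i ≤ A.mulVec v i := by
  intro i
  unfold Matrix.mulVec dotProduct
  exact Finset.sum_le_sum fun j _ => mul_le_mul_of_nonneg_left (h j) (by simpa using hA i j)

lemma exists_eigen {M : Matrix ι ι ℂ} {μ : ℂ} (h : μ ∈ spectrum ℂ M) :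
    ∃ v, v ≠ 0 ∧ M.mulVec v = μ • v := by
  rw [spectrum.mem_iff] at h
  have hdet : (algebraMap ℂ (Matrix ι ι ℂ) μ - M).det = 0 := by
    by_contra hd
    exact h ((Matrix.isUnit_iff_isUnit_det _).mpr (isUnit_iff_ne_zero.mpr hd))
  obtain ⟨v, hv, hmv⟩ := (Matrix.exists_mulVec_eq_zero_iff).mpr hdet
  refine ⟨v, hv, ?_⟩
  rw [Algebra.algebraMap_eq_smul_one, Matrix.sub_mulVec, Matrix.smul_mulVec,
    Matrix.one_mulVec, sub_eq_zero] at hmv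
  exact hmv.symm

lemma mem_spectrum_of_eigen {M : Matrix ι ι ℂ} {μ : ℂ} {v : ι → ℂ} (hv : v ≠ 0)
    (h : M.mulVec v = μ • v) : μ ∈ spectrum ℂ M := by
  rw [spectrum.mem_iff]
  intro hu
  have hdet : (algebraMap ℂ (Matrix ι ι ℂ) μ - M).det ≠ 0 :=
    IsUnit.ne_zero ((Matrix.isUnit_iff_isUnit_det _).mp hu)
  have hz : (algebraMap ℂ (Matrix ι ι ℂ) μ - M).mulVec v = 0 := by
    rw [Algebra.algebraMap_eq_smul_one, Matrix.sub_mulVec, Matrix.smul_mulVec,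
      Matrix.one_mulVec, h, sub_self]
  exact hdet ((Matrix.exists_mulVec_eq_zero_iff).mp ⟨v, hv, hz⟩)

lemma abs_pow_le {M : Matrix ι ι ℂ} {N : Matrix ι ι ℝ}
    (h : ∀ i j, ‖M i j‖ ≤ N i j) (k : ℕ) :
    ∀ i j, ‖(M ^ k) i j‖ ≤ (N ^ k) i j := by
  induction k with
  | zero =>
    intro i j
    rw [pow_zero, pow_zero, Matrix.one_apply, Matrix.one_apply]
    by_cases hij : i = j <;> simp [hij]
  | succ k ih =>
    intro i j
    rw [pow_succ, pow_succ, Matrix.mul_apply, Matrix.mul_apply]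
    calc ‖∑ l, (M ^ k) i l * M l j‖ ≤ ∑ l, ‖(M ^ k) i l * M l j‖ :=
        norm_sum_le _ _
    _ ≤ ∑ l, (N ^ k) i l * N l j := by
        refine Finset.sum_le_sum fun l _ => ?_
        rw [norm_mul]
        exact mul_le_mul (ih i l) (h l j) (norm_nonneg _)
          ((norm_nonneg _).trans (ih i l))

lemma pow_mulVec_eigen {M : Matrix ι ι ℂ} {μ : ℂ} {v : ι → ℂ}
    (h : M.mulVec v = μ • v) (k : ℕ) : (M ^ k).mulVec v = μ ^ k • v := by
  induction k with
  | zero => simp [Matrix.one_mulVec]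
  | succ k ih =>
    rw [pow_succ, ← Matrix.mulVec_mulVec, h, Matrix.mulVec_smul, ih, smul_smul, pow_succ,
      mul_comm]

lemma eig_lt_of_pow_small (M : Matrix ι ι ℂ) (N : Matrix ι ι ℝ) (t : ℝ) (ht : 0 < t)
    (habs : ∀ i j, ‖M i j‖ ≤ N i j)
    (hk : ∀ δ : ℝ, 0 < δ → ∃ k, ∀ i j, (N ^ k) i j ≤ δ * t ^ k)
    {μ : ℂ} (hμ : μ ∈ spectrum ℂ M) : ‖μ‖ < t := by
  by_contra hlt
  push_neg at hlt
  obtain ⟨v, hv, hev⟩ := exists_eigen hμ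
  set w : ι → ℝ := fun i => ‖v i‖ with hw
  have hw0 : ∀ i, 0 ≤ w i := fun i => norm_nonneg _
  have hbound : ∀ (k : ℕ) i, ‖μ‖ ^ k * w i ≤ ∑ j, (N ^ k) i j * w j := by
    intro k i
    have h1 : ((M ^ k).mulVec v) i = (μ ^ k • v) i := by rw [pow_mulVec_eigen hev]
    have h2 : ‖(μ ^ k • v) i‖ = ‖μ‖ ^ k * w i := by
      simp [hw, Pi.smul_apply, smul_eq_mul, norm_mul, norm_pow]
    rw [← h2, ← h1]
    show ‖(M ^ k).mulVec v i‖ ≤ _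
    unfold Matrix.mulVec dotProduct
    calc ‖∑ j, (M ^ k) i j * v j‖ ≤ ∑ j, ‖(M ^ k) i j * v j‖ :=
        norm_sum_le _ _
    _ ≤ ∑ j, (N ^ k) i j * w j := by
        refine Finset.sum_le_sum fun j _ => ?_
        rw [norm_mul]
        exact mul_le_mul_of_nonneg_right (abs_pow_le habs k i j) (hw0 j)
  have hwle : ∀ i, w i ≤ 0 := by
    intro i
    have key : ∀ ε : ℝ, 0 < ε → w i ≤ 0 + ε := by
      intro ε hε
      set c := ∑ j, w j with hc
      have hc0 : 0 ≤ c := Finset.sum_nonneg fun j _ => hw0 j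
      obtain ⟨k, hk'⟩ := hk (ε / (c + 1)) (by positivity)
      have h3 : t ^ k * w i ≤ ‖μ‖ ^ k * w i :=
        mul_le_mul_of_nonneg_right (pow_le_pow_left₀ ht.le hlt k) (hw0 i)
      have h4 : ∑ j, (N ^ k) i j * w j ≤ ∑ j, ε / (c + 1) * t ^ k * w j :=
        Finset.sum_le_sum fun j _ => mul_le_mul_of_nonneg_right (hk' i j) (hw0 j)
      have h5 : ∑ j, ε / (c + 1) * t ^ k * w j = t ^ k * (ε / (c + 1) * c) := by
        rw [← Finset.mul_sum, ← hc]; ring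
      have h6 : t ^ k * w i ≤ t ^ k * (ε / (c + 1) * c) :=
        (h3.trans (hbound k i)).trans (h4.trans_eq h5)
      have h7 : w i ≤ ε / (c + 1) * c := le_of_mul_le_mul_left h6 (pow_pos ht k)
      have h8 : ε / (c + 1) * c ≤ ε := by
        rw [div_mul_eq_mul_div, div_le_iff₀ (by positivity)]
        nlinarith
      linarith
    exact le_of_forall_pos_le_add key
  refine hv (funext fun i => ?_)
  have h9 : ‖v i‖ = 0 := le_antisymm (hwle i) (hw0 i)
  simpa using norm_eq_zero.mp h9

section Norm

attribute [local instance] Matrix.linftyOpNormedRing Matrix.linftyOpNormedAlgebra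

lemma complete : CompleteSpace (Matrix ι ι ℂ) :=
  inferInstanceAs (CompleteSpace (ι → ι → ℂ))

attribute [local instance] complete

lemma entry_le_norm (M : Matrix ι ι ℂ) (i j : ι) : ‖M i j‖ ≤ ‖M‖ := by
  have h1 : (‖M i j‖₊ : ℝ≥0) ≤ ∑ j', ‖M i j'‖₊ :=
    Finset.single_le_sum (f := fun j' => ‖M i j'‖₊) (fun _ _ => zero_le) (Finset.mem_univ j)
  have h2 : (∑ j', ‖M i j'‖₊) ≤ Finset.univ.sup fun i' => ∑ j', ‖M i' j'‖₊ :=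
    Finset.le_sup (f := fun i' => ∑ j', ‖M i' j'‖₊) (Finset.mem_univ i)
  have h3 : ‖M‖₊ = Finset.univ.sup fun i' => ∑ j', ‖M i' j'‖₊ := Matrix.linfty_opNNNorm_def M
  have : ‖M i j‖₊ ≤ ‖M‖₊ := h3 ▸ h1.trans h2
  simpa [← coe_nnnorm] using (NNReal.coe_le_coe.mpr this)

lemma pow_entry_tendsto_zero (N : Matrix ι ι ℝ)
    (h : ∀ μ ∈ spectrum ℂ (N.map Complex.ofReal), ‖μ‖ < 1) :
    ∀ i j, Tendsto (fun k => (N ^ k) i j) atTop (𝓝 0) := by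
  cases isEmpty_or_nonempty ι with
  | inl he => exact fun i => (he.false i).elim
  | inr hne =>
    intro i j
    set B : Matrix ι ι ℂ := N.map Complex.ofReal with hB
    have hnt : Nontrivial (Matrix ι ι ℂ) := inferInstance
    have hρ : spectralRadius ℂ B < (1 : ℝ≥0) := by
      refine spectrum.spectralRadius_lt_of_forall_lt B fun z hz => ?_
      have := h z hz
      exact_mod_cast this
    obtain ⟨x, hx1, hx2⟩ := exists_between hρ
    have hxt : x ≠ ⊤ := (hx2.trans_le le_top).ne
    set q : ℝ≥0 := x.toNNReal with hq
    have hxq : x = (q : ℝ≥0∞) := (ENNReal.coe_toNNReal hxt).symm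
    have hq1 : q < 1 := by
      rw [hxq] at hx2; exact_mod_cast hx2
    have hgel := spectrum.pow_nnnorm_pow_one_div_tendsto_nhds_spectralRadius B
    have hev : ∀ᶠ k : ℕ in atTop, ((‖B ^ k‖₊ : ℝ≥0∞) ^ (1 / (k : ℝ))) < x :=
      hgel.eventually_lt_const hx1
    have hmap : ∀ k : ℕ, B ^ k = (N ^ k).map Complex.ofReal := by
      intro k
      have : ((Complex.ofRealHom.mapMatrix : Matrix ι ι ℝ →+* Matrix ι ι ℂ) N) ^ k =
          (Complex.ofRealHom.mapMatrix : Matrix ι ι ℝ →+* Matrix ι ι ℂ) (N ^ k) :=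
        (map_pow (Complex.ofRealHom.mapMatrix : Matrix ι ι ℝ →+* Matrix ι ι ℂ) N k).symm
      exact this
    have hbd : ∀ᶠ k : ℕ in atTop, |(N ^ k) i j| ≤ (q : ℝ) ^ k := by
      filter_upwards [hev, eventually_ge_atTop 1] with k hk hk1
      have hk0 : (k : ℝ) ≠ 0 := by positivity
      have h4 : ((‖B ^ k‖₊ : ℝ≥0∞) ^ (1 / (k : ℝ))) ^ (k : ℝ) ≤ x ^ (k : ℝ) :=
        ENNReal.rpow_le_rpow hk.le (Nat.cast_nonneg k)
      rw [← ENNReal.rpow_mul, one_div, inv_mul_cancel₀ hk0, ENNReal.rpow_one] at h4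
      rw [hxq, ← ENNReal.coe_rpow_of_nonneg q (Nat.cast_nonneg k), ENNReal.coe_le_coe] at h4
      have h5 : ‖B ^ k‖ ≤ (q : ℝ) ^ k := by
        have := NNReal.coe_le_coe.mpr h4
        rw [NNReal.coe_rpow, Real.rpow_natCast] at this
        simpa [coe_nnnorm] using this
      have h6 : ‖((N ^ k).map Complex.ofReal) i j‖ ≤ ‖B ^ k‖ := by
        rw [← hmap k]; exact entry_le_norm _ i j
      simpa [Matrix.map_apply, Complex.norm_real, Real.norm_eq_abs] using h6.trans h5
    have hq0 : (0:ℝ) ≤ (q:ℝ) := q.coe_nonneg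
    have hqlim : Tendsto (fun k : ℕ => (q : ℝ) ^ k) atTop (𝓝 0) :=
      tendsto_pow_atTop_nhds_zero_of_lt_one hq0 (by exact_mod_cast hq1)
    exact squeeze_zero_norm' (by simpa using hbd) hqlim

end Norm

lemma small_of_tendsto {N : Matrix ι ι ℝ}
    (h : ∀ i j, Tendsto (fun k => (N ^ k) i j) atTop (𝓝 0)) :
    ∀ δ : ℝ, 0 < δ → ∃ k, ∀ i j, (N ^ k) i j ≤ δ := by
  intro δ hδ
  have hev : ∀ᶠ k : ℕ in atTop, ∀ i j, (N ^ k) i j ≤ δ := by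
    rw [eventually_all]
    intro i
    rw [eventually_all]
    intro j
    exact (h i j).eventually_le_const hδ
  exact hev.exists

lemma chain (B : Matrix ι ι ℝ) (hB : entryLE 0 B) (k₀ : ℕ)
    (hsmall : ∀ i j, (B ^ k₀) i j ≤ 1 / (2 * ((Fintype.card ι : ℝ) + 1))) :
    ∀ δ : ℝ, 0 < δ → ∃ k, ∀ i j, (B ^ k) i j ≤ δ := by
  set c : ℝ := (Fintype.card ι : ℝ) with hc
  have hc0 : (0:ℝ) ≤ c := Nat.cast_nonneg _
  set α : ℝ := 1 / (2 * (c + 1)) with hα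
  have hα0 : (0:ℝ) < α := by positivity
  have hcα : c * α ≤ 1 / 2 := by
    rw [hα, mul_one_div, div_le_div_iff₀ (by positivity) (by norm_num)]
    nlinarith
  have key : ∀ m : ℕ, ∀ i j, (B ^ (k₀ * (m + 1))) i j ≤ α * (1/2) ^ m := by
    intro m
    induction m with
    | zero => simpa using hsmall
    | succ m ih =>
      intro i j
      have hsplit : B ^ (k₀ * (m + 2)) = B ^ (k₀ * (m + 1)) * B ^ k₀ := by
        rw [← pow_add]; ring_nf
      rw [hsplit, Matrix.mul_apply]
      have hstep : ∀ l, (B ^ (k₀ * (m + 1))) i l * (B ^ k₀) l j ≤ (α * (1/2) ^ m) * α := by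
        intro l
        have h1 := ih i l
        have h2 := hsmall l j
        have n1 : 0 ≤ (B ^ (k₀ * (m + 1))) i l := by simpa using nn_pow hB _ i l
        have n2 : 0 ≤ (B ^ k₀) l j := by simpa using nn_pow hB _ l j
        exact mul_le_mul h1 h2 n2 (le_trans n1 h1)
      calc ∑ l, (B ^ (k₀ * (m + 1))) i l * (B ^ k₀) l j ≤ ∑ _l : ι, (α * (1/2) ^ m) * α :=
          Finset.sum_le_sum fun l _ => hstep l
      _ = c * ((α * (1/2) ^ m) * α) := by rw [Finset.sum_const, hc]; simp [mul_comm]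
      _ ≤ α * (1/2) ^ (m+1) := by
          have heq : c * ((α * (1/2) ^ m) * α) = (c * α) * (α * (1/2) ^ m) := by ring
          rw [heq, pow_succ]
          nlinarith [mul_le_mul_of_nonneg_right hcα
            (show (0:ℝ) ≤ α * (1/2) ^ m by positivity)]
  intro δ hδ
  obtain ⟨m, hm⟩ := exists_pow_lt_of_lt_one (show (0:ℝ) < δ / α by positivity)
    (show (1:ℝ)/2 < 1 by norm_num)
  refine ⟨k₀ * (m + 1), fun i j => (key m i j).trans ?_⟩
  rw [← le_div_iff₀' hα0]
  exact hm.le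

lemma specRad_nonneg (B : Matrix ι ι ℝ) : 0 ≤ specRad B :=
  Real.sSup_nonneg (by rintro x ⟨μ, _, rfl⟩; exact norm_nonneg μ)

lemma abs_le_specRad {B : Matrix ι ι ℝ} {μ : ℂ}
    (h : μ ∈ spectrum ℂ (B.map Complex.ofReal)) : ‖μ‖ ≤ specRad B :=
  le_csSup (((B.map Complex.ofReal).finite_spectrum.image _).bddAbove)
    (Set.mem_image_of_mem _ h)

lemma specRad_le {B : Matrix ι ι ℝ} {t : ℝ} (ht : 0 ≤ t)
    (h : ∀ μ ∈ spectrum ℂ (B.map Complex.ofReal), ‖μ‖ ≤ t) : specRad B ≤ t :=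
  Real.sSup_le (by rintro x ⟨μ, hμ, rfl⟩; exact h μ hμ) ht

lemma specRad_lt_one {B : Matrix ι ι ℝ}
    (h : ∀ μ ∈ spectrum ℂ (B.map Complex.ofReal), ‖μ‖ < 1) : specRad B < 1 := by
  set s := (fun z : ℂ => ‖z‖) '' spectrum ℂ (B.map Complex.ofReal) with hs
  have hfin : s.Finite := (B.map Complex.ofReal).finite_spectrum.image _
  rcases s.eq_empty_or_nonempty with he | hne
  · rw [specRad, ← hs, he, Real.sSup_empty]; norm_num
  · have hmem := hne.csSup_mem hfin
    rw [specRad, ← hs]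
    obtain ⟨μ, hμ, hval⟩ := hmem
    rw [← hval]
    exact h μ hμ

lemma blockeig {F G : Matrix ι ι ℝ} (hF : entryLE 0 F) (hG : entryLE 0 G)
    (hk : ∀ δ : ℝ, 0 < δ → ∃ k, ∀ i j, ((F + G) ^ k) i j ≤ δ) :
    ∀ μ ∈ spectrum ℂ
      ((Matrix.fromBlocks F G 1 0 : Matrix (ι ⊕ ι) (ι ⊕ ι) ℝ).map Complex.ofReal),
      ‖μ‖ < 1 := by
  intro μ hμ
  by_contra hlt
  push_neg at hlt
  set H : Matrix ι ι ℝ := F + G with hH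
  have hH0 : entryLE 0 H := fun i j => by
    have := add_le_add (hF i j) (hG i j); simpa [hH] using this
  obtain ⟨v, hv, hev⟩ := exists_eigen hμ
  set x : ι → ℂ := fun i => v (Sum.inl i) with hx
  set y : ι → ℂ := fun i => v (Sum.inr i) with hy
  have hform : (Matrix.fromBlocks F G 1 0 : Matrix (ι ⊕ ι) (ι ⊕ ι) ℝ).map Complex.ofReal =
      Matrix.fromBlocks (F.map Complex.ofReal) (G.map Complex.ofReal) 1 0 := by
    rw [Matrix.fromBlocks_map]
    congr 1 <;> ext i j <;>
      simp [Matrix.map_apply, Matrix.one_apply, apply_ite Complex.ofReal]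
  have hvelim : v = Sum.elim x y := by
    funext s; cases s <;> rfl
  rw [hform, hvelim, Matrix.fromBlocks_mulVec] at hev
  have heq1 : ∀ i, (F.map Complex.ofReal).mulVec x i + (G.map Complex.ofReal).mulVec y i
      = μ * x i := by
    intro i
    have := congrFun hev (Sum.inl i)
    simpa using this
  have heq2 : ∀ i, x i = μ * y i := by
    intro i
    have := congrFun hev (Sum.inr i)
    simpa [Matrix.one_mulVec, Matrix.zero_mulVec] using this
  set w : ι → ℝ := fun i => ‖y i‖ with hw
  have hw0 : ∀ i, 0 ≤ w i := fun i => norm_nonneg _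
  set t : ℝ := ‖μ‖ with ht
  have ht1 : (1:ℝ) ≤ t := hlt
  have ht0 : (0:ℝ) < t := lt_of_lt_of_le one_pos ht1
  have hkey : ∀ i, t * w i ≤ H.mulVec w i := by
    intro i
    have e1 : μ * (μ * y i) = ∑ j, (μ * (F.map Complex.ofReal) i j
        + (G.map Complex.ofReal) i j) * y j := by
      rw [← heq2 i, ← heq1 i]
      show (F.map Complex.ofReal).mulVec x i + (G.map Complex.ofReal).mulVec y i = _
      rw [Matrix.mulVec, Matrix.mulVec, dotProduct, dotProduct,
        ← Finset.sum_add_distrib]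
      refine Finset.sum_congr rfl fun j _ => ?_
      rw [heq2 j]
      ring
    have e2 : t * (t * w i) ≤ ∑ j, (t * F i j + G i j) * w j := by
      calc t * (t * w i) = ‖μ * (μ * y i)‖ := by
            simp [ht, hw, norm_mul]
      _ ≤ ∑ j, ‖(μ * (F.map Complex.ofReal) i j
            + (G.map Complex.ofReal) i j) * y j‖ := by rw [e1]; exact norm_sum_le _ _
      _ ≤ ∑ j, (t * F i j + G i j) * w j := by
          refine Finset.sum_le_sum fun j _ => ?_
          rw [norm_mul]
          refine mul_le_mul_of_nonneg_right ?_ (hw0 j)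
          refine (norm_add_le _ _).trans ?_
          rw [norm_mul]
          simp only [Matrix.map_apply, Complex.norm_real, Real.norm_eq_abs]
          rw [abs_of_nonneg (by simpa using hF i j), abs_of_nonneg (by simpa using hG i j)]
    have e3 : ∑ j, (t * F i j + G i j) * w j ≤ t * ∑ j, H i j * w j := by
      rw [Finset.mul_sum]
      refine Finset.sum_le_sum fun j _ => ?_
      have hGle : G i j ≤ t * G i j := le_mul_of_one_le_left (by simpa using hG i j) ht1
      have hle : (t * F i j + G i j) ≤ t * H i j := by
        simp only [hH, Matrix.add_apply]
        rw [mul_add]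
        exact add_le_add le_rfl hGle
      exact le_trans (mul_le_mul_of_nonneg_right hle (hw0 j)) (le_of_eq (mul_assoc _ _ _))
    have e4 := e2.trans e3
    have hmv : H.mulVec w i = ∑ j, H i j * w j := rfl
    rw [hmv]
    exact le_of_mul_le_mul_left (by linarith) ht0
  have hiter : ∀ (k : ℕ) i, t ^ k * w i ≤ (H ^ k).mulVec w i := by
    intro k
    induction k with
    | zero => intro i; simp [Matrix.one_mulVec]
    | succ k ih =>
      intro i
      have s2 : t * (t ^ k * w i) ≤ t * ((H ^ k).mulVec w i) :=
        mul_le_mul_of_nonneg_left (ih i) ht0.le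
      have s3 : t * ((H ^ k).mulVec w i) = (H ^ k).mulVec (fun j => t * w j) i := by
        rw [Matrix.mulVec, Matrix.mulVec, dotProduct, dotProduct, Finset.mul_sum]
        congr 1; funext j; ring
      have s4 : (H ^ k).mulVec (fun j => t * w j) i ≤ (H ^ k).mulVec (H.mulVec w) i :=
        mulVec_mono (nn_pow hH0 k) (fun j => hkey j) i
      have s5 : (H ^ k).mulVec (H.mulVec w) i = ((H ^ (k+1)).mulVec w) i := by
        rw [Matrix.mulVec_mulVec, ← pow_succ]
      calc t ^ (k+1) * w i = t * (t ^ k * w i) := by ring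
      _ ≤ t * ((H ^ k).mulVec w i) := s2
      _ = (H ^ k).mulVec (fun j => t * w j) i := s3
      _ ≤ (H ^ k).mulVec (H.mulVec w) i := s4
      _ = (H ^ (k+1)).mulVec w i := s5
  have hwz : ∀ i, w i = 0 := by
    intro i
    refine le_antisymm ?_ (hw0 i)
    refine le_of_forall_pos_le_add fun ε hε => ?_
    set c : ℝ := ∑ j, w j with hc
    have hc0 : 0 ≤ c := Finset.sum_nonneg fun j _ => hw0 j
    obtain ⟨k, hk'⟩ := hk (ε / (c + 1)) (by positivity)
    have b1 : w i ≤ t ^ k * w i := le_mul_of_one_le_left (hw0 i) (one_le_pow₀ ht1)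
    have b2 : (H ^ k).mulVec w i ≤ ε / (c + 1) * c := by
      rw [Matrix.mulVec, dotProduct]
      calc ∑ j, (H ^ k) i j * w j ≤ ∑ j, ε / (c + 1) * w j :=
          Finset.sum_le_sum fun j _ => mul_le_mul_of_nonneg_right (hk' i j) (hw0 j)
      _ = ε / (c + 1) * c := by rw [← Finset.mul_sum, hc]
    have b3 : ε / (c + 1) * c ≤ ε := by
      rw [div_mul_eq_mul_div, div_le_iff₀ (by positivity)]
      nlinarith
    linarith [hiter k i]
  apply hv
  funext s
  cases s with
  | inr i => simpa [hw] using norm_eq_zero.mp (hwz i)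
  | inl i =>
    have hyi : y i = 0 := by simpa [hw] using norm_eq_zero.mp (hwz i)
    show x i = 0
    rw [heq2 i, hyi, mul_zero]

end Stmt16
namespace Stmt16X

variable {m n : Type*} [Fintype m] [Fintype n] [DecidableEq m] [DecidableEq n]

lemma range_factor {A P : Matrix m n ℝ} {Pdag : Matrix n m ℝ}
    (hrange : LinearMap.range P.mulVecLin = LinearMap.range A.mulVecLin)
    (hP : P * Pdag * P = P) : P * Pdag * A = A := by
  have hcol : ∀ j, ∃ u, P.mulVec u = fun i => A i j := by
    intro j
    have hmem : (fun i => A i j) ∈ LinearMap.range A.mulVecLin := by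
      refine ⟨Pi.single j 1, ?_⟩
      rw [Matrix.mulVecLin_apply]
      funext i
      simp [Matrix.mulVec_single]
    rw [← hrange] at hmem
    obtain ⟨u, hu⟩ := hmem
    exact ⟨u, by rw [← Matrix.mulVecLin_apply]; exact hu⟩
  choose u hu using hcol
  have hfact : P * Matrix.of (fun k j => u j k) = A := by
    ext i j
    rw [Matrix.mul_apply]
    have := congrFun (hu j) i
    rw [Matrix.mulVec, dotProduct] at this
    simpa using this
  calc P * Pdag * A = P * Pdag * (P * Matrix.of (fun k j => u j k)) := by rw [hfact]
  _ = (P * Pdag * P) * Matrix.of (fun k j => u j k) := by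
      rw [Matrix.mul_assoc (P * Pdag)]
  _ = A := by rw [hP, hfact]

lemma ker_factor {A P : Matrix m n ℝ} {Adag : Matrix n m ℝ}
    (hker : LinearMap.ker P.mulVecLin = LinearMap.ker A.mulVecLin)
    (hA : A * Adag * A = A) : P * (Adag * A) = P := by
  have hv : ∀ v, A.mulVec v = 0 → P.mulVec v = 0 := by
    intro v hv0
    have hm : v ∈ LinearMap.ker A.mulVecLin := by
      rw [LinearMap.mem_ker, Matrix.mulVecLin_apply]; exact hv0
    rw [← hker] at hm
    rw [LinearMap.mem_ker, Matrix.mulVecLin_apply] at hm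
    exact hm
  have key : ∀ j, P.mulVec (fun k => ((1 : Matrix n n ℝ) - Adag * A) k j) = 0 := by
    intro j
    apply hv
    funext i'
    have e1 : A.mulVec (fun k => ((1 : Matrix n n ℝ) - Adag * A) k j) i'
        = (A * ((1 : Matrix n n ℝ) - Adag * A)) i' j := by
      rw [Matrix.mul_apply, Matrix.mulVec, dotProduct]
    rw [e1, Matrix.mul_sub, Matrix.mul_one, ← Matrix.mul_assoc, hA, sub_self]
    simp
  have hzero : P * ((1 : Matrix n n ℝ) - Adag * A) = 0 := by
    ext i j
    have := congrFun (key j) i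
    rw [Matrix.mulVec, dotProduct] at this
    rw [Matrix.mul_apply]
    simpa using this
  have := sub_eq_zero.mp (by rwa [Matrix.mul_sub, Matrix.mul_one] at hzero)
  exact this.symm

end Stmt16X

theorem stmt16 {m n : ℕ} (A P R S : Matrix (Fin m) (Fin n) ℝ)
    (Adag Pdag : Matrix (Fin n) (Fin m) ℝ)
    (hAdag : IsMoorePenrose A Adag) (hPdag : IsMoorePenrose P Pdag)
    -- `A = P − R + S` is a double proper weak splitting of type I with `A†P ≥ 0`
    (hsplit : A = P - R + S)
    (hrange : LinearMap.range P.mulVecLin = LinearMap.range A.mulVecLin)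
    (hker : LinearMap.ker P.mulVecLin = LinearMap.ker A.mulVecLin)
    (hPR : entryLE 0 (Pdag * R)) (hPS : entryLE (Pdag * S) 0)
    (hAP : entryLE 0 (Adag * P))
    -- for each `λ > 0`, `B_λ = P_λ − R_λ + S_λ` is a double weak splitting of
    -- type I of `B_λ = AᵀA + λI` with `B_λ⁻¹P_λ ≥ 0`
    (Plam Rlam Slam : ℝ → Matrix (Fin n) (Fin n) ℝ)
    (hBsplit : ∀ l : ℝ, 0 < l →
      Aᵀ * A + l • (1 : Matrix (Fin n) (Fin n) ℝ) = Plam l - Rlam l + Slam l)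
    (hPinv : ∀ l : ℝ, 0 < l → IsUnit (Plam l).det)
    (hRl : ∀ l : ℝ, 0 < l → entryLE 0 ((Plam l)⁻¹ * Rlam l))
    (hSl : ∀ l : ℝ, 0 < l → entryLE 0 (-((Plam l)⁻¹ * Slam l)))
    (hBP : ∀ l : ℝ, 0 < l →
      entryLE 0 ((Aᵀ * A + l • (1 : Matrix (Fin n) (Fin n) ℝ))⁻¹ * Plam l))
    -- `P_λ⁻¹R_λ → R₀` entrywise as `λ → 0⁺`, with `P†R ≥ R₀`
    (R₀ : Matrix (Fin n) (Fin n) ℝ)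
    (hR0tend : Tendsto (fun l : ℝ => (Plam l)⁻¹ * Rlam l) (𝓝[>] 0) (𝓝 R₀))
    (hR0 : entryLE R₀ (Pdag * R))
    -- `P_λ⁻¹S_λ → S₀` entrywise as `λ → 0⁺`, with `S₀ ≥ P†S`
    (S₀ : Matrix (Fin n) (Fin n) ℝ)
    (hS0tend : Tendsto (fun l : ℝ => (Plam l)⁻¹ * Slam l) (𝓝[>] 0) (𝓝 S₀))
    (hS0 : entryLE (Pdag * S) S₀) :
    specRad (Matrix.fromBlocks (Pdag * R) (-(Pdag * S)) 1 0) < 1 ∧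
      ∀ r : ℝ, Tendsto (fun l : ℝ => specRad (itMatI (Plam l) (Rlam l) (Slam l)))
          (𝓝[>] 0) (𝓝 r) →
        r ≤ specRad (Matrix.fromBlocks (Pdag * R) (-(Pdag * S)) 1 0) := by
  classical
  obtain ⟨hA1, hA2, hA3, hA4⟩ := hAdag
  obtain ⟨hP1, hP2, hP3, hP4⟩ := hPdag
  set F : Matrix (Fin n) (Fin n) ℝ := Pdag * R with hFdef
  set G : Matrix (Fin n) (Fin n) ℝ := -(Pdag * S) with hGdef
  have hF0 : entryLE 0 F := hPR
  have hG0 : entryLE 0 G := by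
    intro i j
    have h := hPS i j
    simp only [Matrix.zero_apply] at h
    simp only [hGdef, Matrix.neg_apply, Matrix.zero_apply]
    linarith
  set H : Matrix (Fin n) (Fin n) ℝ := F + G with hHdef
  have hH0 : entryLE 0 H := fun i j => by
    have := add_le_add (hF0 i j) (hG0 i j)
    simpa [hHdef] using this
  -- the key Moore–Penrose identities
  have hPPA : P * Pdag * A = A := Stmt16X.range_factor hrange hP1
  have hPAA : P * (Adag * A) = P := Stmt16X.ker_factor hker hA1
  have hAAPt : Adag * A * Pᵀ = Pᵀ := by
    have h := congrArg Matrix.transpose hPAA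
    rw [Matrix.transpose_mul, hA4] at h
    exact h
  have hPdagfact : Pdag = Pᵀ * (Pdagᵀ * Pdag) := by
    calc Pdag = Pdag * P * Pdag := hP2.symm
    _ = (Pdag * P)ᵀ * Pdag := by rw [hP4]
    _ = Pᵀ * Pdagᵀ * Pdag := by rw [Matrix.transpose_mul]
    _ = Pᵀ * (Pdagᵀ * Pdag) := by rw [Matrix.mul_assoc]
  have hAAPdag : Adag * A * Pdag = Pdag := by
    calc Adag * A * Pdag = Adag * A * (Pᵀ * (Pdagᵀ * Pdag)) := by rw [← hPdagfact]
    _ = (Adag * A * Pᵀ) * (Pdagᵀ * Pdag) := by rw [Matrix.mul_assoc (Adag * A)]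
    _ = Pᵀ * (Pdagᵀ * Pdag) := by rw [hAAPt]
    _ = Pdag := hPdagfact.symm
  have hHfac : H = Pdag * (R - S) := by
    rw [hHdef, hFdef, hGdef, Matrix.mul_sub]
    abel
  have hAAH : Adag * A * H = H := by
    rw [hHfac, ← Matrix.mul_assoc, hAAPdag]
  have hT : Adag * P = Adag * A + Adag * P * H := by
    have h1 : Pdag * A = Pdag * P - H := by
      rw [hsplit, Matrix.mul_add, Matrix.mul_sub, hHdef, hFdef, hGdef]
      abel
    have h2 : Adag * P * (Pdag * A) = Adag * A := by
      calc Adag * P * (Pdag * A) = Adag * (P * (Pdag * A)) := by rw [Matrix.mul_assoc]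
      _ = Adag * (P * Pdag * A) := by rw [← Matrix.mul_assoc P Pdag A]
      _ = Adag * A := by rw [hPPA]
    have h3 : Adag * P * (Pdag * P) = Adag * P := by
      calc Adag * P * (Pdag * P) = Adag * (P * (Pdag * P)) := by rw [Matrix.mul_assoc]
      _ = Adag * (P * Pdag * P) := by rw [← Matrix.mul_assoc P Pdag P]
      _ = Adag * P := by rw [hP1]
    have h4 : Adag * P - Adag * P * H = Adag * A := by
      have h5 := h2
      rw [h1, Matrix.mul_sub, h3] at h5
      exact h5
    rw [← h4]
    abel
  -- telescoping identity
  have hind : ∀ k : ℕ, Adag * P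
      = Adag * A + (∑ j ∈ Finset.range k, H ^ (j+1)) + Adag * P * H ^ (k+1) := by
    intro k
    induction k with
    | zero => simpa using hT
    | succ k ih =>
      have hAAHk : Adag * A * H ^ (k+1) = H ^ (k+1) := by
        rw [pow_succ']
        rw [← Matrix.mul_assoc, hAAH]
      have hstep : Adag * P * H ^ (k+1) = H ^ (k+1) + Adag * P * H ^ (k+1+1) := by
        conv_lhs => rw [hT]
        rw [Matrix.add_mul, hAAHk, Matrix.mul_assoc (Adag * P) H (H ^ (k+1)),
          ← pow_succ' H (k+1)]
      calc Adag * P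
          = Adag * A + (∑ j ∈ Finset.range k, H ^ (j+1)) + Adag * P * H ^ (k+1) := ih
      _ = Adag * A + (∑ j ∈ Finset.range k, H ^ (j+1))
            + (H ^ (k+1) + Adag * P * H ^ (k+1+1)) := by rw [hstep]
      _ = Adag * A + ((∑ j ∈ Finset.range k, H ^ (j+1)) + H ^ (k+1))
            + Adag * P * H ^ (k+1+1) := by abel
      _ = Adag * A + (∑ j ∈ Finset.range (k+1), H ^ (j+1)) + Adag * P * H ^ (k+1+1) := by
          rw [Finset.sum_range_succ]
  -- powers of H tend to zero entrywise
  have hHpow : ∀ i j, Tendsto (fun k => (H ^ k) i j) atTop (𝓝 0) := by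
    intro i j
    have hsum : ∀ k : ℕ, ∑ l ∈ Finset.range k, (H ^ (l+1)) i j
        ≤ (Adag * P) i j - (Adag * A) i j := by
      intro k
      have hnn : (0:ℝ) ≤ (Adag * P * H ^ (k+1)) i j := by
        simpa using Stmt16.nn_mul hAP (Stmt16.nn_pow hH0 (k+1)) i j
      have hentry : (Adag * P) i j = (Adag * A) i j
          + (∑ l ∈ Finset.range k, (H ^ (l+1)) i j) + (Adag * P * H ^ (k+1)) i j := by
        conv_lhs => rw [hind k]
        simp [Matrix.add_apply, Matrix.sum_apply]
      linarith
    have hsummable : Summable (fun l : ℕ => (H ^ (l+1)) i j) :=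
      summable_of_sum_range_le (fun l => by simpa using Stmt16.nn_pow hH0 (l+1) i j) hsum
    have h0 := hsummable.tendsto_atTop_zero
    exact (tendsto_add_atTop_iff_nat 1).mp (by simpa using h0)
  have hHsmall := Stmt16.small_of_tendsto hHpow
  -- PART 1
  have hpart1 : specRad (Matrix.fromBlocks F G 1 0) < 1 :=
    Stmt16.specRad_lt_one (Stmt16.blockeig hF0 hG0 hHsmall)
  refine ⟨hpart1, ?_⟩
  -- PART 2
  intro r hr
  refine le_of_forall_pos_le_add fun ε hε => ?_
  set W : Matrix (Fin n ⊕ Fin n) (Fin n ⊕ Fin n) ℝ := Matrix.fromBlocks F G 1 0 with hWdef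
  have hW0 : entryLE 0 W := by
    intro i j
    rcases i with i | i <;> rcases j with j | j <;>
      simp only [hWdef, Matrix.fromBlocks_apply₁₁, Matrix.fromBlocks_apply₁₂,
        Matrix.fromBlocks_apply₂₁, Matrix.fromBlocks_apply₂₂, Matrix.zero_apply]
    · simpa using hF0 i j
    · simpa using hG0 i j
    · rw [Matrix.one_apply]; split <;> norm_num
    · exact le_rfl
  set ρ : ℝ := specRad W with hρdef
  have hρ0 : 0 ≤ ρ := Stmt16.specRad_nonneg W
  set t : ℝ := ρ + ε with htdef
  have ht0 : (0:ℝ) < t := add_pos_of_nonneg_of_pos hρ0 hε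
  have htρ : ρ < t := lt_add_of_pos_right ρ hε
  -- all eigenvalues of `t⁻¹ • W` have modulus < 1
  have hsc : ∀ μ ∈ spectrum ℂ ((t⁻¹ • W).map Complex.ofReal), ‖μ‖ < 1 := by
    intro μ hμ
    obtain ⟨v, hv, hev⟩ := Stmt16.exists_eigen hμ
    have hmapsmul : (t⁻¹ • W).map Complex.ofReal
        = ((t : ℂ))⁻¹ • (W.map Complex.ofReal) := by
      ext i j
      simp [Matrix.map_apply, Matrix.smul_apply, Complex.ofReal_mul, Complex.ofReal_inv]
    rw [hmapsmul, Matrix.smul_mulVec] at hev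
    have htne : (t : ℂ) ≠ 0 := by exact_mod_cast ht0.ne'
    have hev2 : (W.map Complex.ofReal).mulVec v = ((t : ℂ) * μ) • v := by
      calc (W.map Complex.ofReal).mulVec v
          = ((t:ℂ) * (t:ℂ)⁻¹) • (W.map Complex.ofReal).mulVec v := by
            rw [mul_inv_cancel₀ htne, one_smul]
      _ = (t:ℂ) • ((t:ℂ)⁻¹ • (W.map Complex.ofReal).mulVec v) := by
            rw [mul_smul]
      _ = (t:ℂ) • (μ • v) := by rw [hev]
      _ = ((t:ℂ) * μ) • v := by rw [smul_smul]
    have hle := Stmt16.abs_le_specRad (B := W) (Stmt16.mem_spectrum_of_eigen hv hev2)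
    rw [norm_mul, Complex.norm_real, Real.norm_eq_abs, abs_of_pos ht0] at hle
    have hlt2 : t * ‖μ‖ < t * 1 := by
      rw [mul_one]
      exact lt_of_le_of_lt hle htρ
    exact lt_of_mul_lt_mul_left hlt2 ht0.le
  have hWpow := Stmt16.pow_entry_tendsto_zero (t⁻¹ • W) hsc
  set c : ℝ := ((Fintype.card (Fin n ⊕ Fin n) : ℝ)) with hcdef
  have hc0 : (0:ℝ) ≤ c := Nat.cast_nonneg _
  obtain ⟨k₀, hk₀⟩ := Stmt16.small_of_tendsto hWpow (1 / (4 * (c + 1))) (by positivity)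
  -- choose δ₀ > 0 by continuity
  set J : Matrix (Fin n ⊕ Fin n) (Fin n ⊕ Fin n) ℝ := Matrix.of (fun _ _ => (1:ℝ)) with hJdef
  have hcont : ∀ i j, ContinuousAt (fun d : ℝ => ((t⁻¹ • (W + d • J)) ^ k₀) i j) 0 := by
    intro i j
    apply Continuous.continuousAt
    have h1 : Continuous fun d : ℝ => t⁻¹ • (W + d • J) :=
      (continuous_const.add (continuous_id.smul continuous_const)).const_smul t⁻¹
    exact ((h1.pow k₀).matrix_elem i j)
  have hevd : ∀ᶠ d in 𝓝 (0:ℝ), ∀ i j, ((t⁻¹ • (W + d • J)) ^ k₀) i j ≤ 1 / (2 * (c + 1)) := by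
    rw [eventually_all]
    intro i
    rw [eventually_all]
    intro j
    have hval : ((t⁻¹ • (W + (0:ℝ) • J)) ^ k₀) i j ≤ 1 / (4 * (c + 1)) := by
      simpa using hk₀ i j
    have hlt : ((t⁻¹ • (W + (0:ℝ) • J)) ^ k₀) i j < 1 / (2 * (c + 1)) := by
      refine lt_of_le_of_lt hval ?_
      rw [div_lt_div_iff₀ (by positivity) (by positivity)]
      nlinarith
    exact (hcont i j).eventually_le_const hlt
  obtain ⟨δ₀, hδ₀prop, hδ₀pos⟩ : ∃ d : ℝ,
      (∀ i j, ((t⁻¹ • (W + d • J)) ^ k₀) i j ≤ 1 / (2 * (c + 1))) ∧ 0 < d := by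
    have h1 := hevd.filter_mono (nhdsWithin_le_nhds (s := Set.Ioi (0:ℝ)))
    have h2 : ∀ᶠ d in 𝓝[>] (0:ℝ), (0:ℝ) < d :=
      eventually_mem_nhdsWithin.mono fun d hd => hd
    exact (h1.and h2).exists
  set NN : Matrix (Fin n ⊕ Fin n) (Fin n ⊕ Fin n) ℝ := W + δ₀ • J with hNNdef
  have hNN0 : entryLE 0 NN := by
    intro i j
    have h1 := hW0 i j
    simp only [hNNdef, Matrix.add_apply, Matrix.smul_apply, hJdef, Matrix.of_apply,
      Matrix.zero_apply, smul_eq_mul, mul_one] at h1 ⊢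
    linarith [hδ₀pos]
  have hB0 : entryLE 0 (t⁻¹ • NN) := by
    intro i j
    have h1 := hNN0 i j
    simp only [Matrix.smul_apply, Matrix.zero_apply, smul_eq_mul] at h1 ⊢
    positivity
  have hchain := Stmt16.chain (t⁻¹ • NN) hB0 k₀ (fun i j => hδ₀prop i j)
  have hkN : ∀ δ : ℝ, 0 < δ → ∃ k, ∀ i j, (NN ^ k) i j ≤ δ * t ^ k := by
    intro δ hδ
    obtain ⟨k, hk'⟩ := hchain δ hδ
    refine ⟨k, fun i j => ?_⟩
    have hsp : ((t⁻¹ • NN) ^ k) i j = (t ^ k)⁻¹ * ((NN ^ k) i j) := by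
      rw [smul_pow, Matrix.smul_apply, smul_eq_mul, inv_pow]
    have h1 := hk' i j
    rw [hsp] at h1
    have h2 := mul_le_mul_of_nonneg_left h1 (le_of_lt (pow_pos ht0 k))
    rw [← mul_assoc, mul_inv_cancel₀ (pow_pos ht0 k).ne', one_mul] at h2
    linarith
  -- eventual entrywise bounds on the iteration matrices
  have hRev : ∀ᶠ l in 𝓝[>] (0:ℝ), ∀ i j, ((Plam l)⁻¹ * Rlam l) i j ≤ F i j + δ₀ := by
    rw [eventually_all]
    intro i
    rw [eventually_all]
    intro j
    have htd : Tendsto (fun l => ((Plam l)⁻¹ * Rlam l) i j) (𝓝[>] (0:ℝ)) (𝓝 (R₀ i j)) :=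
      ((continuous_id.matrix_elem i j).tendsto R₀).comp hR0tend
    exact htd.eventually_le_const
      (lt_of_le_of_lt (hR0 i j) (lt_add_of_pos_right _ hδ₀pos))
  have hSev : ∀ᶠ l in 𝓝[>] (0:ℝ), ∀ i j, (-((Plam l)⁻¹ * Slam l)) i j ≤ G i j + δ₀ := by
    rw [eventually_all]
    intro i
    rw [eventually_all]
    intro j
    have htd : Tendsto (fun l => ((Plam l)⁻¹ * Slam l) i j) (𝓝[>] (0:ℝ)) (𝓝 (S₀ i j)) :=
      ((continuous_id.matrix_elem i j).tendsto S₀).comp hS0tend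
    have htd2 : Tendsto (fun l => (-((Plam l)⁻¹ * Slam l)) i j) (𝓝[>] (0:ℝ))
        (𝓝 (-(S₀ i j))) := by
      simpa [Matrix.neg_apply] using htd.neg
    refine htd2.eventually_le_const ?_
    have h1 : -(S₀ i j) ≤ G i j := by
      have := hS0 i j
      simp only [hGdef, Matrix.neg_apply]
      linarith
    exact lt_of_le_of_lt h1 (lt_add_of_pos_right _ hδ₀pos)
  have hfinal : ∀ᶠ l in 𝓝[>] (0:ℝ), specRad (itMatI (Plam l) (Rlam l) (Slam l)) ≤ t := by
    filter_upwards [hRev, hSev, eventually_mem_nhdsWithin] with l hRb hSb hl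
    have hlpos : (0:ℝ) < l := hl
    refine Stmt16.specRad_le ht0.le fun μ hμ => ?_
    refine le_of_lt (Stmt16.eig_lt_of_pow_small _ NN t ht0 ?_ hkN hμ)
    intro i j
    rcases i with i | i <;> rcases j with j | j <;>
      simp only [itMatI, Matrix.map_apply, Matrix.fromBlocks_apply₁₁,
        Matrix.fromBlocks_apply₁₂, Matrix.fromBlocks_apply₂₁, Matrix.fromBlocks_apply₂₂,
        hNNdef, hWdef, hJdef, Matrix.add_apply, Matrix.smul_apply, Matrix.of_apply,
        smul_eq_mul, mul_one, Complex.norm_real, Real.norm_eq_abs]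
    · rw [abs_of_nonneg (by simpa using hRl l hlpos i j)]
      linarith [hRb i j]
    · rw [abs_of_nonneg (by simpa using hSl l hlpos i j)]
      linarith [hSb i j]
    · rw [Matrix.one_apply]
      split <;> simp <;> linarith [hδ₀pos]
    · simpa using hδ₀pos.le
  have hrle : r ≤ t := le_of_tendsto hr hfinal
  exact hrle
end

section
/- Let A ∈ ℝ^{m×n}, b ∈ ℝ^{m}, λ > 0, and let B_λ = M_λ − N_λ be a weak splitting of the first type of B_λ = AᵀA + λI (so M_λ is invertible and M_λ⁻¹N_λ ≥ 0) with B_λ⁻¹N_λ ≥ 0. Then ρ(M_λ⁻¹N_λ) < 1, and for every initial vector x⁰ ∈ ℝⁿ the iteration x^{k+1} = M_λ⁻¹N_λ x^{k} + M_λ⁻¹Aᵀb converges, as k → ∞, to B_λ⁻¹Aᵀb. Moreover B_λ⁻¹Aᵀb → A†b as λ → 0⁺. -/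
open Matrix Filter Topology

section auxlemmas

lemma dp_self_nonneg {k : ℕ} (v : Fin k → ℝ) : 0 ≤ v ⬝ᵥ v :=
  Finset.sum_nonneg fun _ _ => mul_self_nonneg _

lemma aux_posDef {m n : ℕ} (A : Matrix (Fin m) (Fin n) ℝ) {t : ℝ} (ht : 0 < t) :
    (Aᵀ * A + t • (1 : Matrix (Fin n) (Fin n) ℝ)).PosDef := by
  have h1 : (Aᵀ * A).PosSemidef := by
    have := Matrix.posSemidef_conjTranspose_mul_self A
    simpa using this
  have h2 : (t • (1 : Matrix (Fin n) (Fin n) ℝ)).PosDef := by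
    rw [Matrix.smul_one_eq_diagonal]
    exact Matrix.PosDef.diagonal (fun _ => ht)
  exact Matrix.PosDef.posSemidef_add h1 h2

lemma dp_quad {m n : ℕ} (A : Matrix (Fin m) (Fin n) ℝ) (t : ℝ) (w : Fin n → ℝ) :
    t * (w ⬝ᵥ w) ≤ w ⬝ᵥ ((Aᵀ * A + t • (1 : Matrix (Fin n) (Fin n) ℝ)) *ᵥ w) := by
  rw [Matrix.add_mulVec, dotProduct_add, Matrix.smul_mulVec, Matrix.one_mulVec,
    dotProduct_smul]
  have h : 0 ≤ w ⬝ᵥ ((Aᵀ * A) *ᵥ w) := by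
    rw [← Matrix.mulVec_mulVec, Matrix.dotProduct_mulVec, Matrix.vecMul_transpose]
    exact dp_self_nonneg _
  rw [smul_eq_mul]
  linarith

lemma mul_nonneg_entries {n : ℕ} {P Q : Matrix (Fin n) (Fin n) ℝ}
    (hP : ∀ i j, 0 ≤ P i j) (hQ : ∀ i j, 0 ≤ Q i j) : ∀ i j, 0 ≤ (P * Q) i j := by
  intro i j
  rw [Matrix.mul_apply]
  exact Finset.sum_nonneg fun k _ => mul_nonneg (hP i k) (hQ k j)

lemma pow_nonneg_entries {n : ℕ} {T : Matrix (Fin n) (Fin n) ℝ}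
    (hT : ∀ i j, 0 ≤ T i j) : ∀ k : ℕ, ∀ i j, 0 ≤ (T ^ k) i j := by
  intro k
  induction k with
  | zero => intro i j; simp [Matrix.one_apply]; split <;> simp
  | succ k ih => rw [pow_succ]; exact mul_nonneg_entries ih hT

lemma pow_entries_tendsto_zero {n : ℕ} {T C : Matrix (Fin n) (Fin n) ℝ}
    (hT : ∀ i j, 0 ≤ T i j) (hC : ∀ i j, 0 ≤ C i j)
    (hTC : T * C = C - 1) :
    ∀ i j, Tendsto (fun k => (T ^ k) i j) atTop (𝓝 0) := by
  have key : ∀ K : ℕ, ∑ k ∈ Finset.range K, T ^ k = C - T ^ K * C := by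
    intro K
    induction K with
    | zero => simp
    | succ K ih =>
      rw [Finset.sum_range_succ, ih, pow_succ]
      have : T ^ K * T * C = T ^ K * C - T ^ K := by
        rw [mul_assoc, hTC, mul_sub, mul_one]
      rw [this]
      abel
  intro i j
  have hsum : ∀ K : ℕ, ∑ k ∈ Finset.range K, (T ^ k) i j ≤ C i j := by
    intro K
    have := congrArg (fun M : Matrix (Fin n) (Fin n) ℝ => M i j) (key K)
    simp only [Matrix.sum_apply, Matrix.sub_apply] at this
    rw [this]
    have h0 : 0 ≤ (T ^ K * C) i j := mul_nonneg_entries (pow_nonneg_entries hT K) hC i j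
    linarith
  have hsummable : Summable (fun k => (T ^ k) i j) :=
    summable_of_sum_range_le (fun k => pow_nonneg_entries hT k i j) hsum
  exact hsummable.tendsto_atTop_zero

lemma specRad_lt_one {n : ℕ} {T : Matrix (Fin n) (Fin n) ℝ}
    (h : ∀ i j, Tendsto (fun k => (T ^ k) i j) atTop (𝓝 0)) : specRad T < 1 := by
  set Tc : Matrix (Fin n) (Fin n) ℂ := T.map Complex.ofReal with hTc
  have habs : ∀ z ∈ spectrum ℂ Tc, ‖z‖ < 1 := by
    intro z hz
    rw [spectrum.mem_iff, Matrix.isUnit_iff_isUnit_det] at hz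
    have hdet : (algebraMap ℂ (Matrix (Fin n) (Fin n) ℂ) z - Tc).det = 0 := by
      by_contra hne
      exact hz (isUnit_iff_ne_zero.mpr hne)
    obtain ⟨v, hv, hmv⟩ := (Matrix.exists_mulVec_eq_zero_iff).mpr hdet
    have heig : Tc *ᵥ v = z • v := by
      rw [Matrix.sub_mulVec, Algebra.algebraMap_eq_smul_one, Matrix.smul_mulVec,
        Matrix.one_mulVec, sub_eq_zero] at hmv
      exact hmv.symm
    have hpow : ∀ k : ℕ, (Tc ^ k) *ᵥ v = z ^ k • v := by
      intro k
      induction k with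
      | zero => simp
      | succ k ih =>
        rw [pow_succ, ← Matrix.mulVec_mulVec, heig, Matrix.mulVec_smul, ih, pow_succ,
          smul_smul, mul_comm]
    obtain ⟨i, hvi⟩ := Function.ne_iff.mp hv
    have hmap : ∀ k : ℕ, Tc ^ k = (T ^ k).map Complex.ofReal := by
      intro k
      have := map_pow (Complex.ofRealHom.mapMatrix : Matrix (Fin n) (Fin n) ℝ →+* _) T k
      simp only [RingHom.mapMatrix_apply] at this
      rw [hTc]
      exact this.symm
    have hent : Tendsto (fun k => ((Tc ^ k) *ᵥ v) i) atTop (𝓝 0) := by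
      have hrepr : ∀ k, ((Tc ^ k) *ᵥ v) i = ∑ j, (((T ^ k) i j : ℝ) : ℂ) * v j := by
        intro k
        rw [hmap k, Matrix.mulVec]
        simp [dotProduct, Matrix.map_apply]
      simp only [hrepr]
      have hs : Tendsto (fun k => ∑ j, (((T ^ k) i j : ℝ) : ℂ) * v j) atTop
          (𝓝 (∑ _j : Fin n, 0)) := by
        apply tendsto_finset_sum
        intro j _
        have h1 : Tendsto (fun k => (((T ^ k) i j : ℝ) : ℂ)) atTop (𝓝 ((0 : ℝ) : ℂ)) :=
          (Complex.continuous_ofReal.tendsto 0).comp (h i j)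
        simpa using h1.mul_const (v j)
      simpa using hs
    have hz0 : Tendsto (fun k => z ^ k) atTop (𝓝 0) := by
      have h1 : Tendsto (fun k => z ^ k * v i) atTop (𝓝 0) := by
        have hre : ∀ k, ((Tc ^ k) *ᵥ v) i = z ^ k * v i := fun k => by
          rw [hpow k]; simp
        simpa [hre] using hent
      have := h1.mul_const (v i)⁻¹
      simpa [mul_assoc, mul_inv_cancel₀ hvi] using this
    have hn : Tendsto (fun k => ‖z‖ ^ k) atTop (𝓝 0) := by
      have := hz0.norm
      simpa [norm_pow] using this
    have := tendsto_pow_atTop_nhds_zero_iff.mp hn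
    rw [abs_of_nonneg (norm_nonneg z)] at this
    exact this
  rw [specRad]
  rcases Set.eq_empty_or_nonempty ((fun z : ℂ => ‖z‖) '' spectrum ℂ Tc) with he | hne
  · rw [he, Real.sSup_empty]; norm_num
  · have hfin : ((fun z : ℂ => ‖z‖) '' spectrum ℂ Tc).Finite :=
      (Matrix.finite_spectrum Tc).image _
    obtain ⟨z, hz, himz⟩ := hne.csSup_mem hfin
    rw [← himz]
    exact habs z hz

lemma coord_bound {n : ℕ} {w u : Fin n → ℝ} {t : ℝ} (ht : 0 < t)
    (hq : t * (w ⬝ᵥ w) ≤ w ⬝ᵥ u) :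
    ∀ i, |t * w i| ≤ Real.sqrt (u ⬝ᵥ u) := by
  intro i
  have hcs : (w ⬝ᵥ u) ^ 2 ≤ (w ⬝ᵥ w) * (u ⬝ᵥ u) := by
    have := Finset.sum_mul_sq_le_sq_mul_sq Finset.univ w u
    simpa [dotProduct, sq] using this
  have hwi : w i * w i ≤ w ⬝ᵥ w :=
    Finset.single_le_sum (fun j _ => mul_self_nonneg (w j)) (Finset.mem_univ i)
  have hww : 0 ≤ w ⬝ᵥ w := dp_self_nonneg w
  have huu : 0 ≤ u ⬝ᵥ u := dp_self_nonneg u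
  have hsq : (t * w i) ^ 2 ≤ u ⬝ᵥ u := by
    rcases eq_or_lt_of_le hww with heq | hpos
    · have h0 : w i * w i ≤ 0 := by rw [← heq] at hwi; exact hwi
      have hwi0 : w i = 0 := by nlinarith [mul_self_nonneg (w i)]
      rw [hwi0]
      simpa using huu
    · have h1 : 0 ≤ w ⬝ᵥ u := le_trans (mul_nonneg ht.le hww) hq
      have h2 : (t * (w ⬝ᵥ w)) ^ 2 ≤ (w ⬝ᵥ u) ^ 2 :=
        pow_le_pow_left₀ (mul_nonneg ht.le hww) hq 2
      have h3 : (t ^ 2 * (w ⬝ᵥ w)) * (w ⬝ᵥ w) ≤ (u ⬝ᵥ u) * (w ⬝ᵥ w) := by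
        nlinarith [h2.trans hcs]
      have h4 : t ^ 2 * (w ⬝ᵥ w) ≤ u ⬝ᵥ u := le_of_mul_le_mul_right h3 hpos
      have h5 : t ^ 2 * (w i * w i) ≤ t ^ 2 * (w ⬝ᵥ w) :=
        mul_le_mul_of_nonneg_left hwi (sq_nonneg t)
      calc (t * w i) ^ 2 = t ^ 2 * (w i * w i) := by ring
        _ ≤ t ^ 2 * (w ⬝ᵥ w) := h5
        _ ≤ u ⬝ᵥ u := h4
  exact Real.abs_le_sqrt hsq

end auxlemmas

theorem stmt19 {m n : ℕ} (A : Matrix (Fin m) (Fin n) ℝ) (b : Fin m → ℝ)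
    (Adag : Matrix (Fin n) (Fin m) ℝ) (hAdag : IsMoorePenrose A Adag)
    (l : ℝ) (hl : 0 < l)
    (Ml Nl : Matrix (Fin n) (Fin n) ℝ)
    -- `B_λ = M_λ − N_λ` is a weak splitting of the first type with `B_λ⁻¹N_λ ≥ 0`
    (hBsplit : Aᵀ * A + l • (1 : Matrix (Fin n) (Fin n) ℝ) = Ml - Nl)
    (hMinv : IsUnit Ml.det)
    (hweak : entryLE 0 (Ml⁻¹ * Nl))
    (hBN : entryLE 0 ((Aᵀ * A + l • (1 : Matrix (Fin n) (Fin n) ℝ))⁻¹ * Nl)) :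
    specRad (Ml⁻¹ * Nl) < 1 ∧
      (∀ x : ℕ → (Fin n → ℝ),
        (∀ k : ℕ, x (k + 1) = (Ml⁻¹ * Nl) *ᵥ x k + Ml⁻¹ *ᵥ (Aᵀ *ᵥ b)) →
        Tendsto x atTop
          (𝓝 ((Aᵀ * A + l • (1 : Matrix (Fin n) (Fin n) ℝ))⁻¹ *ᵥ (Aᵀ *ᵥ b)))) ∧
      Tendsto
        (fun t : ℝ => (Aᵀ * A + t • (1 : Matrix (Fin n) (Fin n) ℝ))⁻¹ *ᵥ (Aᵀ *ᵥ b))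
        (𝓝[>] 0) (𝓝 (Adag *ᵥ b)) := by
  obtain ⟨h1, h2, h3, h4⟩ := hAdag
  set B : Matrix (Fin n) (Fin n) ℝ := Aᵀ * A + l • (1 : Matrix (Fin n) (Fin n) ℝ) with hBdef
  have hBpd : B.PosDef := aux_posDef A hl
  have hBdet : IsUnit B.det := isUnit_iff_ne_zero.mpr hBpd.det_pos.ne'
  set T : Matrix (Fin n) (Fin n) ℝ := Ml⁻¹ * Nl with hTdef
  set C : Matrix (Fin n) (Fin n) ℝ := 1 + B⁻¹ * Nl with hCdef
  have hMl : Ml = B + Nl := by rw [hBsplit]; abel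
  have hCM : C = B⁻¹ * Ml := by
    rw [hCdef, hMl, mul_add, Matrix.nonsing_inv_mul _ hBdet]
  have hCT : C * T = C - 1 := by
    rw [hCM, hTdef, mul_assoc, ← mul_assoc Ml, Matrix.mul_nonsing_inv _ hMinv, one_mul,
      hMl, mul_add, Matrix.nonsing_inv_mul _ hBdet]
    abel
  have hTC : T * C = C - 1 := by
    have hC1 : C * (1 - T) = 1 := by
      rw [mul_sub, mul_one, hCT]; abel
    have h1C : (1 - T) * C = 1 := mul_eq_one_comm.mp hC1
    rw [sub_mul, one_mul, sub_eq_iff_eq_add] at h1C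
    exact (sub_eq_of_eq_add' h1C).symm
  have hTnn : ∀ i j, 0 ≤ T i j := fun i j => by simpa using hweak i j
  have hCnn : ∀ i j, 0 ≤ C i j := by
    intro i j
    rw [hCdef, Matrix.add_apply]
    have h1' : (0 : ℝ) ≤ (1 : Matrix (Fin n) (Fin n) ℝ) i j := by
      rw [Matrix.one_apply]; split <;> norm_num
    have h2' : (0 : ℝ) ≤ (B⁻¹ * Nl) i j := by simpa using hBN i j
    linarith
  have htend := pow_entries_tendsto_zero hTnn hCnn hTC
  refine ⟨specRad_lt_one htend, ?_, ?_⟩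
  · -- Part 2
    intro x hx
    set xs : Fin n → ℝ := B⁻¹ *ᵥ (Aᵀ *ᵥ b) with hxs
    set c : Fin n → ℝ := Ml⁻¹ *ᵥ (Aᵀ *ᵥ b) with hc
    have hfixM : T * B⁻¹ + Ml⁻¹ = B⁻¹ := by
      have key : Nl * B⁻¹ + 1 = Ml * B⁻¹ := by
        rw [hMl, add_mul, Matrix.mul_nonsing_inv _ hBdet]; abel
      calc T * B⁻¹ + Ml⁻¹ = Ml⁻¹ * (Nl * B⁻¹ + 1) := by
            rw [hTdef, mul_add, mul_one, mul_assoc]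
        _ = Ml⁻¹ * (Ml * B⁻¹) := by rw [key]
        _ = B⁻¹ := by rw [← mul_assoc, Matrix.nonsing_inv_mul _ hMinv, one_mul]
    have hfix : T *ᵥ xs + c = xs := by
      rw [hxs, hc, Matrix.mulVec_mulVec, ← Matrix.add_mulVec, hfixM]
    have hform : ∀ k, x k = xs + (T ^ k) *ᵥ (x 0 - xs) := by
      intro k
      induction k with
      | zero => simp
      | succ k ih =>
        calc x (k + 1) = T *ᵥ x k + c := hx k
          _ = T *ᵥ (xs + (T ^ k) *ᵥ (x 0 - xs)) + c := by rw [ih]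
          _ = (T *ᵥ xs + c) + T *ᵥ ((T ^ k) *ᵥ (x 0 - xs)) := by
              rw [Matrix.mulVec_add]; abel
          _ = xs + (T * T ^ k) *ᵥ (x 0 - xs) := by
              rw [hfix, Matrix.mulVec_mulVec]
          _ = xs + (T ^ (k + 1)) *ᵥ (x 0 - xs) := by rw [← pow_succ']
    rw [tendsto_pi_nhds]
    intro i
    have : ∀ k, x k i = xs i + ∑ j, (T ^ k) i j * (x 0 - xs) j := by
      intro k
      rw [hform k]
      simp [Matrix.mulVec, dotProduct]
    simp only [this]
    have hsum : Tendsto (fun k => ∑ j, (T ^ k) i j * (x 0 - xs) j) atTop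
        (𝓝 (∑ _j : Fin n, 0)) := by
      apply tendsto_finset_sum
      intro j _
      simpa using (htend i j).mul_const ((x 0 - xs) j)
    have := (tendsto_const_nhds (x := xs i) (f := atTop)).add hsum
    simpa using this
  · -- Part 3
    have h5 : Aᵀ * Adagᵀ = Adag * A := by rw [← Matrix.transpose_mul, h4]
    have hAtAX : Aᵀ * A * Adag = Aᵀ := by
      calc Aᵀ * A * Adag = Aᵀ * (A * Adag) := Matrix.mul_assoc _ _ _
        _ = Aᵀ * (A * Adag)ᵀ := by rw [h3]
        _ = Aᵀ * (Adagᵀ * Aᵀ) := by rw [Matrix.transpose_mul]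
        _ = (A * Adag * A)ᵀ := by rw [Matrix.transpose_mul, Matrix.transpose_mul]
        _ = Aᵀ := by rw [h1]
    have hu : Aᵀ * A * (Adag * Adagᵀ * Adag) = Adag := by
      simp only [← Matrix.mul_assoc]
      rw [hAtAX, h5]
      exact h2
    set y : Fin n → ℝ := Adag *ᵥ b with hy
    set u : Fin n → ℝ := (Adag * Adagᵀ * Adag) *ᵥ b with huu
    have hAb : Aᵀ *ᵥ b = (Aᵀ * A) *ᵥ y := by
      rw [hy, Matrix.mulVec_mulVec, hAtAX]
    have hyu : y = (Aᵀ * A) *ᵥ u := by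
      rw [hy, huu, Matrix.mulVec_mulVec, hu]
    set cst : ℝ := Real.sqrt (u ⬝ᵥ u) with hcst
    rw [tendsto_pi_nhds]
    intro i
    -- the formula and bound, valid for t > 0
    have hmain : ∀ t : ℝ, 0 < t →
        |((Aᵀ * A + t • (1 : Matrix (Fin n) (Fin n) ℝ))⁻¹ *ᵥ (Aᵀ *ᵥ b)) i - y i|
          ≤ t * (|u i| + cst) := by
      intro t ht
      set Bt : Matrix (Fin n) (Fin n) ℝ := Aᵀ * A + t • (1 : Matrix (Fin n) (Fin n) ℝ)
        with hBt
      have hBtpd : Bt.PosDef := aux_posDef A ht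
      have hBtdet : IsUnit Bt.det := isUnit_iff_ne_zero.mpr hBtpd.det_pos.ne'
      have hAA : Aᵀ * A = Bt - t • (1 : Matrix (Fin n) (Fin n) ℝ) := by
        rw [hBt]; abel
      have hinvBt : ∀ v : Fin n → ℝ, Bt⁻¹ *ᵥ (Bt *ᵥ v) = v := by
        intro v
        rw [Matrix.mulVec_mulVec, Matrix.nonsing_inv_mul _ hBtdet, Matrix.one_mulVec]
      have hred : ∀ v : Fin n → ℝ, Bt⁻¹ *ᵥ ((Aᵀ * A) *ᵥ v) = v - t • (Bt⁻¹ *ᵥ v) := by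
        intro v
        rw [hAA, Matrix.sub_mulVec, Matrix.mulVec_sub, hinvBt,
          Matrix.smul_mulVec, Matrix.one_mulVec, Matrix.mulVec_smul]
      set w : Fin n → ℝ := Bt⁻¹ *ᵥ u with hw
      have hq : t * (w ⬝ᵥ w) ≤ w ⬝ᵥ u := by
        have hdq := dp_quad A t w
        rw [← hBt] at hdq
        have hBtw : Bt *ᵥ w = u := by
          rw [hw, Matrix.mulVec_mulVec, Matrix.mul_nonsing_inv _ hBtdet, Matrix.one_mulVec]
        rwa [hBtw] at hdq
      have hbound : ∀ j : Fin n, |t * w j| ≤ cst := fun j => coord_bound ht hq j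
      -- formula
      have hformula : (Bt⁻¹ *ᵥ (Aᵀ *ᵥ b)) i - y i = -(t * u i) + t * (t * w i) := by
        have : Bt⁻¹ *ᵥ (Aᵀ *ᵥ b) = y - t • u + (t • (t • w)) := by
          rw [hAb, hred y, hyu, hred u, ← hw]
          rw [smul_sub]
          abel
        rw [this]
        simp [smul_smul]
        ring
      rw [hformula]
      calc |(-(t * u i) + t * (t * w i))| ≤ |(-(t * u i))| + |t * (t * w i)| := abs_add_le _ _
        _ = t * |u i| + t * |t * w i| := by
            rw [abs_neg, abs_mul, abs_mul, abs_of_pos ht]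
        _ ≤ t * |u i| + t * cst := by
            have := hbound i
            nlinarith
        _ = t * (|u i| + cst) := by ring
    -- squeeze
    rw [tendsto_iff_dist_tendsto_zero]
    simp only [Real.dist_eq]
    have hb : Tendsto (fun t : ℝ => t * (|u i| + cst)) (𝓝[>] 0) (𝓝 0) := by
      have hcont : Tendsto (fun t : ℝ => t * (|u i| + cst)) (𝓝 0) (𝓝 (0 * (|u i| + cst))) :=
        (continuous_id.mul continuous_const).tendsto 0
      rw [zero_mul] at hcont
      exact hcont.mono_left nhdsWithin_le_nhds
    refine squeeze_zero' (Eventually.of_forall fun t => abs_nonneg _) ?_ hb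
    filter_upwards [self_mem_nhdsWithin] with t ht
    exact hmain t ht
end
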